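/- Let f be a convex function on ℝ with left-derivative f'_- and second derivative measure f''. Then for all a, b ∈ ℝ (not necessarily ordered): f(b) − f(a) = f'_-(a)(b−a) + ∫_ℝ 1_{[a∧b, a∨b)}(u) |b−u| f''(du). -/

import Mathlib

open Filter Set MeasureTheory

/-- The left derivative of a convex function is at most the slope to the right. -/
lemma left_deriv_le_slope_aux {f : ℝ → ℝ} (hf : ConvexOn ℝ Set.univ f) {c d l : ℝ}
    (hl : HasDerivWithinAt f l (Set.Iio c) c) (hcd : c < d) :
    l ≤ slope f c d := by
  apply le_of_tendsto ((hasDerivWithinAt_iff_tendsto_slope' notMem_Iio_self).mp hl)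
  simp_rw [slope_def_field]
  filter_upwards [self_mem_nhdsWithin] with t (ht : t < c)
  exact hf.secant_mono (mem_univ c) (mem_univ t) (mem_univ d) ht.ne hcd.ne'
    (ht.le.trans hcd.le)

/-- A convex function with left derivatives `f'` has `f'` monotone. -/
lemma monotone_left_deriv_aux {f f' : ℝ → ℝ} (hf : ConvexOn ℝ Set.univ f)
    (hf' : ∀ y : ℝ, HasDerivWithinAt f (f' y) (Set.Iio y) y) :
    Monotone f' := by
  intro c d hcd
  rcases eq_or_lt_of_le hcd with rfl | h
  · exact le_refl _
  exact (left_deriv_le_slope_aux hf (hf' c) h).trans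
    (hf.slope_le_of_hasDerivWithinAt_Iio (mem_univ c) (mem_univ d) h (hf' d))

/-- Fundamental theorem of calculus for the left derivative of a convex function. -/
lemma ftc_left_deriv_aux {f f' : ℝ → ℝ} (hf : ConvexOn ℝ Set.univ f)
    (hf' : ∀ y : ℝ, HasDerivWithinAt f (f' y) (Set.Iio y) y)
    {c d : ℝ} (hcd : c ≤ d) :
    ∫ t in c..d, f' t = f d - f c := by
  have hmono : Monotone f' := monotone_left_deriv_aux hf hf'
  have hcont : Continuous f := hf.locallyLipschitz.continuous
  have hgmono : Monotone fun x : ℝ => -f' (-x) := by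
    intro x y hxy
    simpa using hmono (neg_le_neg hxy)
  have key := intervalIntegral.integral_eq_sub_of_hasDeriv_right_of_le
    (f := fun x : ℝ => f (-x)) (f' := fun x : ℝ => -f' (-x))
    (neg_le_neg hcd) ((hcont.comp continuous_neg).continuousOn)
    (fun x _ => by
      have h2 : HasDerivWithinAt (fun y : ℝ => -y) (-1) (Ioi x) x :=
        (hasDerivAt_neg x).hasDerivWithinAt
      have h3 := (hf' (-x)).comp x h2 (fun y hy => by
        simp only [mem_Iio]
        exact neg_lt_neg hy)
      simpa [Function.comp_def, mul_comm] using h3)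
    hgmono.intervalIntegrable
  have h4 : (∫ y in (-d)..(-c), f' (-y)) = ∫ x in c..d, f' x := by
    have := intervalIntegral.integral_comp_neg (a := -d) (b := -c) f'
    simpa using this
  rw [intervalIntegral.integral_neg, h4] at key
  simp only [neg_neg] at key
  linarith

/-- Key computation, case `a ≤ b`. -/
lemma key_integral_le_aux {f' : ℝ → ℝ} (hmono : Monotone f') (μ : Measure ℝ)
    (hμ : ∀ c d : ℝ, c ≤ d → μ (Set.Ico c d) = ENNReal.ofReal (f' d - f' c))
    {a b : ℝ} (hab : a ≤ b) :
    ∫ u, (Set.Ico a b).indicator (fun v => b - v) u ∂μ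
      = ∫ t in Set.Ioc a b, (f' t - f' a) := by
  set ν := μ.restrict (Ico a b) with hν
  haveI : IsFiniteMeasure ν := by
    constructor
    rw [hν, Measure.restrict_apply_univ, hμ a b hab]
    exact ENNReal.ofReal_lt_top
  set S : Set (ℝ × ℝ) := {p | a ≤ p.1 ∧ p.1 < p.2 ∧ p.2 ≤ b} with hS
  have hSm : MeasurableSet S :=
    (measurableSet_le measurable_const measurable_fst).inter
      ((measurableSet_lt measurable_fst measurable_snd).inter
        (measurableSet_le measurable_snd measurable_const))
  -- interval integrability of f' on Ioc a b
  have hint : IntegrableOn (fun t => f' t - f' a) (Ioc a b) volume := by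
    have h1 : IntervalIntegrable f' volume a b := hmono.intervalIntegrable
    rw [intervalIntegrable_iff, uIoc_of_le hab] at h1
    exact h1.sub (integrableOn_const measure_Ioc_lt_top.ne)
  have hnn : 0 ≤ᵐ[volume.restrict (Ioc a b)] fun t => f' t - f' a := by
    refine (ae_restrict_iff' measurableSet_Ioc).2 (ae_of_all _ fun t ht => ?_)
    exact sub_nonneg.2 (hmono ht.1.le)
  have hL : (∫⁻ u, ENNReal.ofReal (b - u) ∂ν)
      = ENNReal.ofReal (∫ t in Ioc a b, (f' t - f' a)) := by
    calc ∫⁻ u, ENNReal.ofReal (b - u) ∂ν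
        = ∫⁻ u, ∫⁻ t, S.indicator (fun _ => (1 : ENNReal)) (u, t) ∂volume ∂ν := by
          refine lintegral_congr_ae ?_
          filter_upwards [ae_restrict_mem measurableSet_Ico] with u hu
          have h1 : (fun t => S.indicator (fun _ => (1 : ENNReal)) (u, t))
              = (Ioc u b).indicator (fun _ => (1 : ENNReal)) := by
            funext t
            by_cases h : t ∈ Ioc u b
            · rw [indicator_of_mem h, indicator_of_mem]
              exact ⟨hu.1, h.1, h.2⟩
            · rw [indicator_of_notMem h, indicator_of_notMem]
              intro hmem
              exact h ⟨hmem.2.1, hmem.2.2⟩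
          rw [h1, lintegral_indicator measurableSet_Ioc]
          simp [Real.volume_Ioc]
      _ = ∫⁻ t, ∫⁻ u, S.indicator (fun _ => (1 : ENNReal)) (u, t) ∂ν ∂volume := by
          exact lintegral_lintegral_swap
            ((measurable_const.indicator hSm).aemeasurable)
      _ = ∫⁻ t, (Ioc a b).indicator (fun t => ENNReal.ofReal (f' t - f' a)) t ∂volume := by
          refine lintegral_congr fun t => ?_
          have hT : MeasurableSet {u : ℝ | a ≤ u ∧ u < t ∧ t ≤ b} :=
            (measurableSet_le measurable_const measurable_id).inter
              ((measurableSet_lt measurable_id measurable_const).inter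
                (MeasurableSet.const _))
          have h1 : (fun u => S.indicator (fun _ => (1 : ENNReal)) (u, t))
              = ({u : ℝ | a ≤ u ∧ u < t ∧ t ≤ b}).indicator (fun _ => (1 : ENNReal)) := by
            funext u
            simp [indicator_apply, hS, mem_setOf_eq]
          rw [h1, lintegral_indicator hT]
          simp only [setLIntegral_one]
          rw [hν, Measure.restrict_apply hT]
          by_cases ht : t ∈ Ioc a b
          · have h2 : {u : ℝ | a ≤ u ∧ u < t ∧ t ≤ b} ∩ Ico a b = Ico a t := by
              ext u
              simp only [mem_inter_iff, mem_setOf_eq, mem_Ico]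
              constructor
              · rintro ⟨⟨h1, h2, _⟩, _⟩
                exact ⟨h1, h2⟩
              · rintro ⟨h1, h2⟩
                exact ⟨⟨h1, h2, ht.2⟩, h1, lt_of_lt_of_le h2 ht.2⟩
            rw [h2, hμ a t ht.1.le, indicator_of_mem ht]
          · have h2 : {u : ℝ | a ≤ u ∧ u < t ∧ t ≤ b} ∩ Ico a b = ∅ := by
              refine eq_empty_iff_forall_notMem.2 fun u hu => ?_
              obtain ⟨⟨h1, h2, h3⟩, _⟩ := hu
              exact ht ⟨lt_of_le_of_lt h1 h2, h3⟩
            rw [h2, measure_empty, indicator_of_notMem ht]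
      _ = ∫⁻ t in Ioc a b, ENNReal.ofReal (f' t - f' a) ∂volume := by
          rw [lintegral_indicator measurableSet_Ioc]
      _ = ENNReal.ofReal (∫ t in Ioc a b, (f' t - f' a)) :=
          (ofReal_integral_eq_lintegral_ofReal hint hnn).symm
  rw [integral_indicator measurableSet_Ico]
  rw [integral_eq_lintegral_of_nonneg_ae
    ((ae_restrict_iff' measurableSet_Ico).2 (ae_of_all _ fun u hu => sub_nonneg.2 hu.2.le))
    ((continuous_const.sub continuous_id).aestronglyMeasurable)]
  rw [← hν, hL, ENNReal.toReal_ofReal]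
  exact setIntegral_nonneg measurableSet_Ioc fun t ht => sub_nonneg.2 (hmono ht.1.le)

/-- Key computation, case `b ≤ a`. -/
lemma key_integral_ge_aux {f' : ℝ → ℝ} (hmono : Monotone f') (μ : Measure ℝ)
    (hμ : ∀ c d : ℝ, c ≤ d → μ (Set.Ico c d) = ENNReal.ofReal (f' d - f' c))
    {a b : ℝ} (hba : b ≤ a) :
    ∫ u, (Set.Ico b a).indicator (fun v => v - b) u ∂μ
      = ∫ t in Set.Ioc b a, (f' a - f' t) := by
  set ν := μ.restrict (Ico b a) with hν
  haveI : IsFiniteMeasure ν := by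
    constructor
    rw [hν, Measure.restrict_apply_univ, hμ b a hba]
    exact ENNReal.ofReal_lt_top
  set S : Set (ℝ × ℝ) := {p | p.1 < a ∧ b < p.2 ∧ p.2 ≤ p.1} with hS
  have hSm : MeasurableSet S :=
    (measurableSet_lt measurable_fst measurable_const).inter
      ((measurableSet_lt measurable_const measurable_snd).inter
        (measurableSet_le measurable_snd measurable_fst))
  have hint : IntegrableOn (fun t => f' a - f' t) (Ioc b a) volume := by
    have h1 : IntervalIntegrable f' volume b a := hmono.intervalIntegrable
    rw [intervalIntegrable_iff, uIoc_of_le hba] at h1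
    exact (integrableOn_const measure_Ioc_lt_top.ne).sub h1
  have hnn : 0 ≤ᵐ[volume.restrict (Ioc b a)] fun t => f' a - f' t := by
    refine (ae_restrict_iff' measurableSet_Ioc).2 (ae_of_all _ fun t ht => ?_)
    exact sub_nonneg.2 (hmono ht.2)
  have hL : (∫⁻ u, ENNReal.ofReal (u - b) ∂ν)
      = ENNReal.ofReal (∫ t in Ioc b a, (f' a - f' t)) := by
    calc ∫⁻ u, ENNReal.ofReal (u - b) ∂ν
        = ∫⁻ u, ∫⁻ t, S.indicator (fun _ => (1 : ENNReal)) (u, t) ∂volume ∂ν := by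
          refine lintegral_congr_ae ?_
          filter_upwards [ae_restrict_mem measurableSet_Ico] with u hu
          have h1 : (fun t => S.indicator (fun _ => (1 : ENNReal)) (u, t))
              = (Ioc b u).indicator (fun _ => (1 : ENNReal)) := by
            funext t
            by_cases h : t ∈ Ioc b u
            · rw [indicator_of_mem h, indicator_of_mem]
              exact ⟨hu.2, h.1, h.2⟩
            · rw [indicator_of_notMem h, indicator_of_notMem]
              intro hmem
              exact h ⟨hmem.2.1, hmem.2.2⟩
          rw [h1, lintegral_indicator measurableSet_Ioc]
          simp [Real.volume_Ioc]
      _ = ∫⁻ t, ∫⁻ u, S.indicator (fun _ => (1 : ENNReal)) (u, t) ∂ν ∂volume := by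
          exact lintegral_lintegral_swap
            ((measurable_const.indicator hSm).aemeasurable)
      _ = ∫⁻ t, (Ioc b a).indicator (fun t => ENNReal.ofReal (f' a - f' t)) t ∂volume := by
          refine lintegral_congr fun t => ?_
          have hT : MeasurableSet {u : ℝ | u < a ∧ b < t ∧ t ≤ u} :=
            (measurableSet_lt measurable_id measurable_const).inter
              ((MeasurableSet.const _).inter
                (measurableSet_le measurable_const measurable_id))
          have h1 : (fun u => S.indicator (fun _ => (1 : ENNReal)) (u, t))
              = ({u : ℝ | u < a ∧ b < t ∧ t ≤ u}).indicator (fun _ => (1 : ENNReal)) := by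
            funext u
            simp [indicator_apply, hS, mem_setOf_eq]
          rw [h1, lintegral_indicator hT]
          simp only [setLIntegral_one]
          rw [hν, Measure.restrict_apply hT]
          by_cases ht : t ∈ Ioc b a
          · have h2 : {u : ℝ | u < a ∧ b < t ∧ t ≤ u} ∩ Ico b a = Ico t a := by
              ext u
              simp only [mem_inter_iff, mem_setOf_eq, mem_Ico]
              constructor
              · rintro ⟨⟨h1, _, h3⟩, _⟩
                exact ⟨h3, h1⟩
              · rintro ⟨h1, h2⟩
                exact ⟨⟨h2, ht.1, h1⟩, le_trans ht.1.le h1, h2⟩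
            rw [h2, hμ t a ht.2, indicator_of_mem ht]
          · have h2 : {u : ℝ | u < a ∧ b < t ∧ t ≤ u} ∩ Ico b a = ∅ := by
              refine eq_empty_iff_forall_notMem.2 fun u hu => ?_
              obtain ⟨⟨h1, h2, h3⟩, _⟩ := hu
              exact ht ⟨h2, le_trans h3 h1.le⟩
            rw [h2, measure_empty, indicator_of_notMem ht]
      _ = ∫⁻ t in Ioc b a, ENNReal.ofReal (f' a - f' t) ∂volume := by
          rw [lintegral_indicator measurableSet_Ioc]
      _ = ENNReal.ofReal (∫ t in Ioc b a, (f' a - f' t)) :=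
          (ofReal_integral_eq_lintegral_ofReal hint hnn).symm
  rw [integral_indicator measurableSet_Ico]
  rw [integral_eq_lintegral_of_nonneg_ae
    ((ae_restrict_iff' measurableSet_Ico).2 (ae_of_all _ fun u hu => sub_nonneg.2 hu.1))
    ((continuous_id.sub continuous_const).aestronglyMeasurable)]
  rw [← hν, hL, ENNReal.toReal_ofReal]
  exact setIntegral_nonneg measurableSet_Ioc fun t ht => sub_nonneg.2 (hmono ht.2)

/-- For a convex `f : ℝ → ℝ` with left derivative `f'` and second derivative measure `μ`
(satisfying `μ([c,d)) = f'(d) − f'(c)` for `c ≤ d`), one has for all `a, b` (not necessarily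
ordered): `f(b) − f(a) = f'(a)(b−a) + ∫_ℝ 1_{[a∧b, a∨b)}(u) |b−u| μ(du)`. -/
theorem convex_taylor_left_deriv_unordered
    (f f' : ℝ → ℝ) (μ : Measure ℝ)
    (hf : ConvexOn ℝ Set.univ f)
    (hf' : ∀ y : ℝ, HasDerivWithinAt f (f' y) (Set.Iio y) y)
    (hμ : ∀ c d : ℝ, c ≤ d → μ (Set.Ico c d) = ENNReal.ofReal (f' d - f' c)) :
    ∀ a b : ℝ,
      f b - f a = f' a * (b - a) +
        ∫ u, (Set.Ico (min a b) (max a b)).indicator (fun v => |b - v|) u ∂μ := by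
  have hmono : Monotone f' := monotone_left_deriv_aux hf hf'
  intro a b
  rcases le_total a b with hab | hba
  · simp only [min_eq_left hab, max_eq_right hab]
    have hind : ∀ u, (Set.Ico a b).indicator (fun v => |b - v|) u
        = (Set.Ico a b).indicator (fun v => b - v) u := by
      intro u
      by_cases h : u ∈ Set.Ico a b
      · rw [indicator_of_mem h, indicator_of_mem h, abs_of_nonneg (sub_nonneg.2 h.2.le)]
      · rw [indicator_of_notMem h, indicator_of_notMem h]
    simp_rw [hind]
    rw [key_integral_le_aux hmono μ hμ hab]
    have h1 : ∫ t in Set.Ioc a b, (f' t - f' a) = ∫ t in a..b, (f' t - f' a) :=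
      (intervalIntegral.integral_of_le hab).symm
    have h2 : IntervalIntegrable f' volume a b := hmono.intervalIntegrable
    have h3 : ∫ t in a..b, (f' t - f' a)
        = (∫ t in a..b, f' t) - (b - a) * f' a := by
      rw [intervalIntegral.integral_sub h2 intervalIntegrable_const,
        intervalIntegral.integral_const, smul_eq_mul]
    rw [h1, h3, ftc_left_deriv_aux hf hf' hab]
    ring
  · simp only [min_eq_right hba, max_eq_left hba]
    have hind : ∀ u, (Set.Ico b a).indicator (fun v => |b - v|) u
        = (Set.Ico b a).indicator (fun v => v - b) u := by
      intro u
      by_cases h : u ∈ Set.Ico b a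
      · rw [indicator_of_mem h, indicator_of_mem h, abs_of_nonpos (sub_nonpos.2 h.1)]
        ring
      · rw [indicator_of_notMem h, indicator_of_notMem h]
    simp_rw [hind]
    rw [key_integral_ge_aux hmono μ hμ hba]
    have h1 : ∫ t in Set.Ioc b a, (f' a - f' t) = ∫ t in b..a, (f' a - f' t) :=
      (intervalIntegral.integral_of_le hba).symm
    have h2 : IntervalIntegrable f' volume b a := hmono.intervalIntegrable
    have h3 : ∫ t in b..a, (f' a - f' t)
        = (a - b) * f' a - (∫ t in b..a, f' t) := by
      rw [intervalIntegral.integral_sub intervalIntegrable_const h2,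
        intervalIntegral.integral_const, smul_eq_mul]
    rw [h1, h3, ftc_left_deriv_aux hf hf' hba]
    ring
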